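/- Let n ≥ 3, let a, λ ∈ ℂ with λ ≠ 0, and let F = a·x_0^n + λ·x_0^{n-1}x_1 + G(x_1,…,x_b) ∈ ℂ[x_0,…,x_b], where G is a form of degree n not involving x_0. Then rk 𝓗_F(e_0) ≥ 2, where e_0 = (1,0,…,0) ∈ ℂ^{b+1}. -/

import Mathlib

open MvPolynomial

/-- The tensor of `k`-th order partial derivatives of `F`, evaluated at `v`:
its `(i_1, …, i_k)` entry is `(∂^k F / ∂x_{i_1} ⋯ ∂x_{i_k})(v)`. -/
noncomputable def HF {σ : Type*} [DecidableEq σ] (k : ℕ) (F : MvPolynomial σ ℂ) (v : σ → ℂ) :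
    (Fin k → σ) → ℂ := fun idx =>
  eval v ((List.ofFn idx).foldl (fun p i => pderiv i p) F)

/-- A tensor of type `m × ⋯ × m` (`k` factors) has rank one if it is nonzero and is an
outer product of `k` vectors. -/
def IsRankOne {k m : ℕ} (T : (Fin k → Fin m) → ℂ) : Prop :=
  T ≠ 0 ∧ ∃ v : Fin k → Fin m → ℂ, ∀ j, T j = ∏ i, v i (j i)

/-- The rank of a tensor: the least `r` such that `T` is a sum of `r` rank-one tensors. -/
noncomputable def tensorRank {k m : ℕ} (T : (Fin k → Fin m) → ℂ) : ℕ :=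
  sInf {r | ∃ f : Fin r → ((Fin k → Fin m) → ℂ), (∀ s, IsRankOne (f s)) ∧ T = ∑ s, f s}

namespace Stmt9Aux

noncomputable def D {σ : Type*} [DecidableEq σ] (L : List σ) (P : MvPolynomial σ ℂ) :
    MvPolynomial σ ℂ := L.foldl (fun p i => pderiv i p) P

section Gen
variable {σ : Type*} [DecidableEq σ]

@[simp] lemma D_nil (P : MvPolynomial σ ℂ) : D ([] : List σ) P = P := rfl

@[simp] lemma D_cons (i : σ) (L : List σ) (P : MvPolynomial σ ℂ) :
    D (i :: L) P = D L (pderiv i P) := rfl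

lemma D_zero : ∀ L : List σ, D L (0 : MvPolynomial σ ℂ) = 0
  | [] => rfl
  | i :: L => by rw [D_cons, map_zero, D_zero]

lemma D_add (L : List σ) (P Q : MvPolynomial σ ℂ) : D L (P + Q) = D L P + D L Q := by
  induction L generalizing P Q with
  | nil => rfl
  | cons i L ih => rw [D_cons, map_add, ih, D_cons, D_cons]

lemma isHomogeneous_pderiv {H : MvPolynomial σ ℂ} {d : ℕ}
    (h : H.IsHomogeneous d) (i : σ) : (pderiv i H).IsHomogeneous (d - 1) := by
  nth_rewrite 1 [H.as_sum]
  rw [map_sum]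
  apply IsHomogeneous.sum
  intro s hs
  rw [pderiv_monomial]
  by_cases h0 : s i = 0
  · simpa [h0] using isHomogeneous_zero σ ℂ (d - 1)
  · apply isHomogeneous_monomial
    have hd : (Finsupp.weight 1) s = d := h (MvPolynomial.mem_support_iff.mp hs)
    have hsum : (s - Finsupp.single i 1) + Finsupp.single i 1 = s := by
      ext j
      rcases eq_or_ne j i with rfl | hji
      · simp [Finsupp.single_apply]; omega
      · simp [Finsupp.single_apply, hji, (Ne.symm hji)]
    have hdeg1 : (Finsupp.weight 1) (Finsupp.single i (1:ℕ)) = 1 := by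
      rw [show (Finsupp.weight 1 : (σ →₀ ℕ) →+ ℕ) = Finsupp.weight (fun _ => 1) from rfl,
        ← Finsupp.degree_eq_weight_one]
      exact Finsupp.degree_single i 1
    have hkey : (s - Finsupp.single i 1).degree + 1 = d := by
      rw [Finsupp.degree_eq_weight_one, ← hd]
      conv_rhs => rw [← hsum]
      rw [map_add, hdeg1]; rfl
    omega
end Gen

variable {b : ℕ}

lemma one_ne_zero' (hb : 1 ≤ b) : (1 : Fin (b + 1)) ≠ 0 := by
  intro h
  have h1 : ((1 : Fin (b + 1)) : ℕ) = 1 % (b + 1) := Fin.val_one' (b + 1)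
  rw [h, Nat.mod_eq_of_lt (by omega)] at h1
  simp at h1

lemma pdCpow (c : ℂ) (k : ℕ) :
    pderiv (0 : Fin (b + 1)) (C c * X 0 ^ (k + 1)) = C (c * ((k + 1 : ℕ) : ℂ)) * X 0 ^ k := by
  rw [pderiv_C_mul, pderiv_pow, pderiv_X_self, map_mul, ← C_eq_coe_nat]
  push_cast
  ring

lemma pdX1Cpow (hb : 1 ≤ b) (c : ℂ) (k : ℕ) :
    pderiv (1 : Fin (b + 1)) (C c * X 0 ^ k) = 0 := by
  rw [pderiv_C_mul, pderiv_pow, pderiv_X_of_ne (Ne.symm (one_ne_zero' hb))]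
  ring

lemma pdX1mul (hb : 1 ≤ b) (c : ℂ) (k : ℕ) :
    pderiv (1 : Fin (b + 1)) (C c * X 0 ^ k * X 1) = C c * X 0 ^ k := by
  rw [pderiv_mul, pdX1Cpow hb, pderiv_X_self]
  ring

lemma pd0mul (hb : 1 ≤ b) (c : ℂ) (k : ℕ) :
    pderiv (0 : Fin (b + 1)) (C c * X 0 ^ (k + 1) * X 1) =
      C (c * ((k + 1 : ℕ) : ℂ)) * X 0 ^ k * X 1 := by
  rw [pderiv_mul, pdCpow, pderiv_X_of_ne (one_ne_zero' hb)]
  ring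

/-- Repeated `x₀`-derivatives of `C c * X 0 ^ (t+1)` leave `C (c*d) * X 0` with `d ≠ 0`. -/
lemma Drep : ∀ (t : ℕ) (c : ℂ), ∃ d : ℕ, 0 < d ∧
    D (List.replicate t (0 : Fin (b + 1))) (C c * X 0 ^ (t + 1)) = C (c * (d : ℂ)) * X 0 := by
  intro t
  induction t with
  | zero => exact fun c => ⟨1, one_pos, by simp⟩
  | succ t ih =>
    intro c
    obtain ⟨d, hd, heq⟩ := ih (c * ((t + 2 : ℕ) : ℂ))
    refine ⟨(t + 2) * d, by positivity, ?_⟩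
    rw [List.replicate_succ, D_cons, pdCpow c (t + 1), heq]
    push_cast
    ring_nf

/-- Derivatives of `rename Fin.succ H` stay of that shape, with homogeneity bookkeeping. -/
lemma DC : ∀ (L : List (Fin (b + 1))) (d : ℕ) (H : MvPolynomial (Fin b) ℂ),
    H.IsHomogeneous d → ∃ H' : MvPolynomial (Fin b) ℂ,
      H'.IsHomogeneous (d - L.length) ∧ D L (rename Fin.succ H) = rename Fin.succ H' := by
  intro L
  induction L with
  | nil => exact fun d H hH => ⟨H, by simpa using hH, rfl⟩
  | cons i L ih =>
    intro d H hH
    rcases Fin.eq_zero_or_eq_succ i with rfl | ⟨k, rfl⟩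
    · have hzero : pderiv (0 : Fin (b + 1)) (rename Fin.succ H) = 0 := by
        apply pderiv_eq_zero_of_notMem_vars
        intro hmem
        have := vars_rename Fin.succ H hmem
        simp only [Finset.mem_image] at this
        obtain ⟨j, -, hj⟩ := this
        exact Fin.succ_ne_zero j hj
      refine ⟨0, isHomogeneous_zero _ _ _, ?_⟩
      rw [D_cons, hzero, D_zero, map_zero]
    · have hr : pderiv (Fin.succ k) (rename Fin.succ H) = rename Fin.succ (pderiv k H) :=
        pderiv_rename (Fin.succ_injective b) k H
      obtain ⟨H', hH', heq⟩ := ih (d - 1) (pderiv k H) (isHomogeneous_pderiv hH k)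
      refine ⟨H', ?_, by rw [D_cons, hr, heq]⟩
      have h2 : d - (Fin.succ k :: L).length = d - 1 - L.length := by
        simp only [List.length_cons]; omega
      rw [h2]; exact hH'

/-- Evaluating an `(m+2)`-fold derivative of the degree `m+3` form `rename Fin.succ G`
at `e₀` gives `0`. -/
lemma evalC (m : ℕ) (G : MvPolynomial (Fin b) ℂ) (hG : G.IsHomogeneous (m + 3))
    (L : List (Fin (b + 1))) (hL : L.length = m + 2) :
    eval (Pi.single (0 : Fin (b + 1)) (1 : ℂ)) (D L (rename Fin.succ G)) = 0 := by
  obtain ⟨H', hH', heq⟩ := DC L (m + 3) G hG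
  rw [heq, eval_rename]
  have hcomp : ((Pi.single (0 : Fin (b + 1)) (1 : ℂ)) ∘ Fin.succ) = 0 := by
    funext j
    simp [Pi.single_eq_of_ne (Fin.succ_ne_zero j)]
  rw [hcomp]
  rw [hL] at hH'
  have h1 : m + 3 - (m + 2) = 1 := by omega
  rw [h1] at hH'
  rw [MvPolynomial.eval_zero, constantCoeff_eq]
  exact hH'.coeff_eq_zero (by simp)

lemma finset_sum_to_fin {ι V : Type*} [AddCommMonoid V] (P : V → Prop) (S : Finset ι)
    (g : ι → V) (hg : ∀ x ∈ S, P (g x)) :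
    ∃ (r : ℕ) (f : Fin r → V), (∀ s, P (f s)) ∧ ∑ x ∈ S, g x = ∑ s, f s := by
  classical
  induction S using Finset.induction_on with
  | empty => exact ⟨0, fun s => s.elim0, fun s => s.elim0, by simp⟩
  | @insert a s ha ih =>
    obtain ⟨r, f, hf, hsum⟩ := ih (fun x hx => hg x (Finset.mem_insert_of_mem hx))
    refine ⟨r + 1, Fin.cons (g a) f, ?_, ?_⟩
    · intro t
      induction t using Fin.cases with
      | zero => simpa using hg a (Finset.mem_insert_self a s)
      | succ t => simpa using hf t
    · rw [Finset.sum_insert ha, Fin.sum_univ_succ]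
      simp [hsum]

lemma exists_decomp {k m : ℕ} (hk : 0 < k) (T : (Fin k → Fin m) → ℂ) :
    ∃ (r : ℕ) (f : Fin r → ((Fin k → Fin m) → ℂ)),
      (∀ s, IsRankOne (f s)) ∧ T = ∑ s, f s := by
  classical
  have key := finset_sum_to_fin IsRankOne
    (Finset.univ.filter (fun j => T j ≠ 0))
    (fun j => fun x => if x = j then T j else 0) ?_
  · obtain ⟨r, f, hf, hsum⟩ := key
    refine ⟨r, f, hf, ?_⟩
    rw [← hsum]
    funext x
    rw [Finset.sum_apply]
    rw [Finset.sum_ite_eq (Finset.univ.filter (fun j => T j ≠ 0)) x (fun j => T j)]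
    by_cases h : T x = 0
    · simp [h]
    · simp [h]
  · intro j hj
    rw [Finset.mem_filter] at hj
    have hjne : T j ≠ 0 := hj.2
    constructor
    · intro h
      have := congrFun h j
      simp only [if_pos rfl, Pi.zero_apply] at this
      exact hjne this
    · refine ⟨fun i x => if x = j i then (if i = ⟨0, hk⟩ then T j else 1) else 0, ?_⟩
      intro x
      by_cases hx : x = j
      · subst hx
        simp
      · have h2 : ∃ i, x i ≠ j i := by
          by_contra hc
          push_neg at hc
          exact hx (funext hc)
        obtain ⟨i, hi⟩ := h2
        show (if x = j then T j else 0) = _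
        rw [if_neg hx]
        exact (Finset.prod_eq_zero (Finset.mem_univ i) (by simp [hi])).symm

lemma ofFn_cons {α : Type*} {kk : ℕ} (x : α) (g : Fin kk → α) :
    List.ofFn (Fin.cons x g) = x :: List.ofFn g := by
  rw [List.ofFn_succ]
  simp

end Stmt9Aux

set_option maxHeartbeats 1000000 in
open Stmt9Aux in
/-- Let `n ≥ 3`, `λ ≠ 0`, and
`F = a·x_0^n + λ·x_0^{n-1}·x_1 + G(x_1, …, x_b)` where `G` is a form of degree `n` not
involving `x_0`. Then `rk 𝓗_F(e_0) ≥ 2`. -/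
theorem stmt_9 (b n : ℕ) (hn : 3 ≤ n) (hb : 1 ≤ b) (a lam : ℂ) (hlam : lam ≠ 0)
    (G : MvPolynomial (Fin b) ℂ) (hG : G.IsHomogeneous n) :
    2 ≤ tensorRank (HF (n - 1)
      (C a * X 0 ^ n + C lam * X 0 ^ (n - 1) * X 1 + rename Fin.succ G)
      (Pi.single (0 : Fin (b + 1)) 1)) := by
  obtain ⟨m, rfl⟩ : ∃ m, n = m + 3 := ⟨n - 3, by omega⟩
  rw [show m + 3 - 1 = m + 2 from rfl]
  set e0 : Fin (b + 1) → ℂ := Pi.single (0 : Fin (b + 1)) 1 with he0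
  set F : MvPolynomial (Fin (b + 1)) ℂ :=
    C a * X 0 ^ (m + 3) + C lam * X 0 ^ (m + 2) * X 1 + rename Fin.succ G with hF
  set T : (Fin (m + 2) → Fin (b + 1)) → ℂ := HF (m + 2) F e0 with hT
  -- the three special index tuples
  set j1 : Fin (m + 2) → Fin (b + 1) := Fin.cons 1 (fun _ => 0) with hj1
  set j2 : Fin (m + 2) → Fin (b + 1) := Fin.cons 0 (Fin.cons 1 (fun _ => 0)) with hj2
  set j12 : Fin (m + 2) → Fin (b + 1) := Fin.cons 1 (Fin.cons 1 (fun _ => 0)) with hj12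
  have hHF : ∀ idx : Fin (m + 2) → Fin (b + 1), T idx = eval e0 (D (List.ofFn idx) F) :=
    fun _ => rfl
  have hL1 : List.ofFn j1 = 1 :: List.replicate (m + 1) (0 : Fin (b + 1)) := by
    rw [hj1, ofFn_cons, List.ofFn_const]
  have hL2 : List.ofFn j2 = 0 :: 1 :: List.replicate m (0 : Fin (b + 1)) := by
    rw [hj2, ofFn_cons, ofFn_cons, List.ofFn_const]
  have hL12 : List.ofFn j12 = 1 :: 1 :: List.replicate m (0 : Fin (b + 1)) := by
    rw [hj12, ofFn_cons, ofFn_cons, List.ofFn_const]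
  -- value at j1
  have hTj1 : T j1 ≠ 0 := by
    obtain ⟨d, hd, hrep⟩ := Drep (b := b) (m + 1) lam
    have hval : T j1 = lam * (d : ℂ) := by
      rw [hHF j1, hL1, hF, D_add, D_add, map_add, map_add]
      rw [D_cons, D_cons, D_cons, pdX1Cpow hb, pdX1mul hb, D_zero]
      rw [show (m + 2) = (m + 1) + 1 from rfl, hrep]
      have hC := evalC (b := b) m G hG (1 :: List.replicate (m + 1) (0 : Fin (b + 1)))
        (by simp)
      rw [D_cons] at hC
      rw [hC]
      simp [he0]
    rw [hval]
    exact mul_ne_zero hlam (Nat.cast_ne_zero.mpr (by omega))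
  -- value at j2
  have hTj2 : T j2 ≠ 0 := by
    obtain ⟨d, hd, hrep⟩ := Drep (b := b) m (lam * ((m + 2 : ℕ) : ℂ))
    have hval : T j2 = lam * ((m + 2 : ℕ) : ℂ) * (d : ℂ) := by
      rw [hHF j2, hL2, hF, D_add, D_add, map_add, map_add]
      rw [D_cons, D_cons, D_cons, D_cons,
        show ((m + 3) : ℕ) = (m + 2) + 1 from rfl, pdCpow a (m + 2),
        show ((m + 2) : ℕ) = (m + 1) + 1 from rfl, pd0mul hb lam (m + 1),
        pdX1Cpow hb, pdX1mul hb, D_zero, hrep]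
      have hC := evalC (b := b) m G hG (0 :: 1 :: List.replicate m (0 : Fin (b + 1)))
        (by simp)
      rw [hC]
      simp [he0]
      left; left; ring
    rw [hval]
    exact mul_ne_zero (mul_ne_zero hlam (Nat.cast_ne_zero.mpr (by omega)))
      (Nat.cast_ne_zero.mpr (by omega))
  -- value at j12
  have hTj12 : T j12 = 0 := by
    rw [hHF j12, hL12, hF, D_add, D_add, map_add, map_add]
    rw [D_cons, D_cons, D_cons, D_cons, pdX1Cpow hb, pdX1mul hb, pdX1Cpow hb,
      map_zero, D_zero]
    have hC := evalC (b := b) m G hG (1 :: 1 :: List.replicate m (0 : Fin (b + 1)))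
      (by simp)
    rw [hC]
    simp
  -- now the rank bound
  apply le_csInf
  · obtain ⟨r, f, hf, hsum⟩ := exists_decomp (k := m + 2) (m := b + 1) (by omega) T
    exact ⟨r, f, hf, hsum⟩
  · rintro r ⟨f, hf, hsum⟩
    by_contra hlt
    push_neg at hlt
    interval_cases r
    · rw [show (∑ s : Fin 0, f s) = 0 by simp] at hsum
      exact hTj1 (congrFun hsum j1)
    · rw [Fin.sum_univ_one] at hsum
      obtain ⟨-, v, hv⟩ := hf 0
      have hT' : ∀ j, T j = ∏ i, v i (j i) := by
        intro j; rw [hsum]; exact hv j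
      have h1 := hT' j1
      have h2 := hT' j2
      have h12 := hT' j12
      rw [Fin.prod_univ_succ, Fin.prod_univ_succ] at h1 h2 h12
      simp only [hj1, hj2, hj12, Fin.cons_zero, Fin.cons_succ, Fin.succ_zero_eq_one] at h1 h2 h12
      have hfac1 : v 0 1 ≠ 0 ∧ (v 1 0 * ∏ i : Fin m, v i.succ.succ 0) ≠ 0 := by
        rw [h1] at hTj1
        exact mul_ne_zero_iff.mp hTj1
      have hP : (∏ i : Fin m, v i.succ.succ 0) ≠ 0 :=
        (mul_ne_zero_iff.mp hfac1.2).2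
      have hfac2 : v 1 1 ≠ 0 := by
        rw [h2] at hTj2
        exact (mul_ne_zero_iff.mp (mul_ne_zero_iff.mp hTj2).2).1
      rw [h12] at hTj12
      exact (mul_ne_zero hfac1.1 (mul_ne_zero hfac2 hP)) hTj12
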